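/- If G is a disconnected co-diamond-free graph with at least two components each containing a path on 3 vertices, then a contradiction arises; equivalently, a co-diamond-free graph has at most one connected component that is not a clique. -/
import Mathlib


/-- A co-diamond-free graph has at most one connected component that is not a
clique: any two vertices whose components are non-cliques are in the same
component. -/
theorem stmt_4 {V : Type*} (G : SimpleGraph V)
    (hcd : ¬ ∃ a b c d : V, a ≠ b ∧ a ≠ c ∧ a ≠ d ∧ b ≠ c ∧ b ≠ d ∧ c ≠ d ∧
      G.Adj a b ∧ ¬ G.Adj a c ∧ ¬ G.Adj a d ∧ ¬ G.Adj b c ∧ ¬ G.Adj b d ∧ ¬ G.Adj c d) :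
    ∀ u v : V,
      (∃ x y : V, G.Reachable u x ∧ G.Reachable u y ∧ x ≠ y ∧ ¬ G.Adj x y) →
      (∃ x y : V, G.Reachable v x ∧ G.Reachable v y ∧ x ≠ y ∧ ¬ G.Adj x y) →
      G.Reachable u v := by
  rintro u v ⟨c, d, huc, hud, hcd', hcdna⟩ ⟨x, y, hvx, hvy, hxy, -⟩
  by_contra huv
  -- anything reachable from v is distinct and non-adjacent to anything reachable from u
  have hsep : ∀ p q : V, G.Reachable v p → G.Reachable u q → p ≠ q ∧ ¬ G.Adj p q := by
    intro p q hp hq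
    constructor
    · rintro rfl; exact huv (hq.trans hp.symm)
    · intro hadj; exact huv ((hq.trans hadj.symm.reachable).trans hp.symm)
  obtain ⟨w⟩ := hvx.symm.trans hvy
  cases w with
  | nil => exact hxy rfl
  | @cons _ b _ h p =>
    obtain ⟨hxc, hxcna⟩ := hsep x c hvx huc
    obtain ⟨hxd, hxdna⟩ := hsep x d hvx hud
    obtain ⟨hbc, hbcna⟩ := hsep b c (hvx.trans h.reachable) huc
    obtain ⟨hbd, hbdna⟩ := hsep b d (hvx.trans h.reachable) hud
    exact hcd ⟨x, b, c, d, h.ne, hxc, hxd, hbc, hbd, hcd', h, hxcna, hxdna, hbcna, hbdna, hcdna⟩
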